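/- Let f be a holomorphic function on the upper half-plane, γ = [[a,b],[c,d]] ∈ SL₂(ℝ), k an integer, and m ≥ 0. Then D^m((f|_k γ)(τ)) = Σ_{r=0}^m C(m,r)·(k+r)_{m-r}·(-(1/(2πi))·c/(cτ+d))^{m-r}·((D^r f)|_{k+2r} γ)(τ), where D = (2πi)^{-1} d/dτ and (f|_k γ)(τ) = (cτ+d)^{-k} f((aτ+b)/(cτ+d)). -/

import Mathlib

open Complex Finset

noncomputable section

/-- The normalized derivative `D = (2πi)⁻¹ d/dτ`. -/
def Dop (f : ℂ → ℂ) : ℂ → ℂ := fun τ => (2 * ↑Real.pi * I)⁻¹ * deriv f τ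

/-- Rising factorial `x (x+1) ⋯ (x+n-1)` for complex `x`. -/
def risingC (x : ℂ) (n : ℕ) : ℂ := ∏ i ∈ Finset.range n, (x + i)

/-- Weight `k` slash action of `γ = [[a,b],[c,d]]` on functions of the upper half-plane:
`(f|_k γ)(τ) = (cτ+d)^{-k} f((aτ+b)/(cτ+d))`. -/
def slash (k : ℤ) (a b c d : ℝ) (f : ℂ → ℂ) : ℂ → ℂ :=
  fun τ => ((c : ℂ) * τ + (d : ℂ)) ^ (-k) * f (((a : ℂ) * τ + (b : ℂ)) / ((c : ℂ) * τ + (d : ℂ)))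


lemma risingC_zero (x : ℂ) : risingC x 0 = 1 := Finset.prod_range_zero _

lemma risingC_succ (x : ℂ) (n : ℕ) : risingC x (n + 1) = risingC x n * (x + n) :=
  Finset.prod_range_succ _ _

lemma risingC_succ' (x : ℂ) (n : ℕ) : risingC x (n + 1) = x * risingC (x + 1) n := by
  unfold risingC
  rw [Finset.prod_range_succ']
  simp only [Nat.cast_zero, add_zero]
  rw [mul_comm]
  congr 1
  refine Finset.prod_congr rfl fun i _ => ?_
  push_cast; ring

lemma key_comb (k : ℂ) (m r : ℕ) (hr : r ≤ m) :
    (m.choose (r + 1) : ℂ) * risingC (k + r + 1) (m - r - 1) * (k + m + r + 1) +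
      (m.choose r : ℂ) * risingC (k + r) (m - r) =
    ((m + 1).choose (r + 1) : ℂ) * risingC (k + r + 1) (m - r) := by
  rcases eq_or_lt_of_le hr with rfl | hlt
  · simp [Nat.choose_eq_zero_of_lt (Nat.lt_succ_self r), Nat.choose_self, risingC_zero]
  · obtain ⟨j, hj⟩ : ∃ j, m - r = j + 1 := ⟨m - r - 1, by omega⟩
    have hj' : m - r - 1 = j := by omega
    rw [hj', hj, risingC_succ' (k + r) j, risingC_succ (k + r + 1) j]
    have hχ : (m.choose (r + 1) : ℂ) * (r + 1) = (m.choose r : ℂ) * ((m : ℂ) - r) := by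
      have h := Nat.choose_succ_right_eq m r
      have h2 : ((m.choose (r+1) * (r+1) : ℕ) : ℂ) = ((m.choose r * (m - r) : ℕ) : ℂ) := by
        norm_cast
      push_cast [Nat.cast_sub hr] at h2
      linear_combination h2
    have hpas : (((m + 1).choose (r + 1) : ℕ) : ℂ) = (m.choose r : ℂ) + (m.choose (r + 1) : ℂ) := by
      rw [Nat.choose_succ_succ]
      push_cast; ring
    have hjc : (j : ℂ) = (m : ℂ) - r - 1 := by
      have h : (j : ℕ) + 1 = m - r := hj.symm
      have h3 : (((j + 1 : ℕ)) : ℂ) = ((m - r : ℕ) : ℂ) := by norm_cast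
      push_cast [Nat.cast_sub hr] at h3
      linear_combination h3
    rw [hpas, hjc]
    linear_combination risingC (k + r + 1) j * hχ

lemma twoPiI_ne : (2 * (Real.pi:ℂ) * I) ≠ 0 := by
  simp [Real.pi_ne_zero, I_ne_zero, Complex.ofReal_ne_zero]

lemma isOpen_H : IsOpen {z : ℂ | 0 < z.im} := isOpen_lt continuous_const Complex.continuous_im

lemma denom_ne (a b c d : ℝ) (hdet : a * d - b * c = 1) (τ : ℂ) (hτ : 0 < τ.im) :
    (c:ℂ) * τ + d ≠ 0 := by
  rcases eq_or_ne c 0 with hc | hc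
  · have hd : d ≠ 0 := by rintro rfl; simp [hc] at hdet
    simp [hc, Complex.ofReal_ne_zero, hd]
  · intro h
    have : ((c:ℂ) * τ + d).im = 0 := by rw [h]; simp
    simp [Complex.add_im, Complex.mul_im] at this
    rcases this with h1 | h1
    · exact hc (by exact_mod_cast h1)
    · exact (ne_of_gt hτ) h1

lemma im_g (a b c d : ℝ) (hdet : a * d - b * c = 1) (τ : ℂ) (hτ : 0 < τ.im) :
    0 < (((a:ℂ) * τ + b) / ((c:ℂ) * τ + d)).im := by
  have hne := denom_ne a b c d hdet τ hτ
  have h0 : 0 < Complex.normSq ((c:ℂ) * τ + d) := Complex.normSq_pos.2 hne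
  have key : (((a:ℂ) * τ + b) / ((c:ℂ) * τ + d)).im = τ.im / Complex.normSq ((c:ℂ) * τ + d) := by
    rw [Complex.div_im, div_sub_div_same]
    congr 1
    simp only [Complex.add_im, Complex.add_re, Complex.mul_re, Complex.mul_im,
      Complex.ofReal_re, Complex.ofReal_im]
    ring_nf
    linear_combination τ.im * hdet
  rw [key]
  exact div_pos hτ h0

/-- holomorphy of iterates of Dop -/
lemma Dop_iter_diff (f : ℂ → ℂ) (hf : DifferentiableOn ℂ f {z : ℂ | 0 < z.im}) (r : ℕ) :
    DifferentiableOn ℂ (Dop^[r] f) {z : ℂ | 0 < z.im} := by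
  induction r with
  | zero => exact hf
  | succ r ih =>
      rw [Function.iterate_succ_apply']
      have hd : DifferentiableOn ℂ (deriv (Dop^[r] f)) {z : ℂ | 0 < z.im} :=
        ((ih.analyticOnNhd isOpen_H).deriv).differentiableOn
      exact (hd.const_smul ((2 * (Real.pi:ℂ) * I)⁻¹)).congr (fun z _ => by simp [Dop, smul_eq_mul])

/-- derivative of the denominator -/
lemma hasDerivAt_denom (c d : ℝ) (τ : ℂ) :
    HasDerivAt (fun t : ℂ => (c:ℂ) * t + d) (c:ℂ) τ := by
  simpa using ((hasDerivAt_id τ).const_mul (c:ℂ)).add_const (d:ℂ)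

/-- derivative of the Möbius map -/
lemma hasDerivAt_moebius (a b c d : ℝ) (hdet : a * d - b * c = 1) (τ : ℂ) (hτ : 0 < τ.im) :
    HasDerivAt (fun t : ℂ => ((a:ℂ) * t + b) / ((c:ℂ) * t + d))
      ((((c:ℂ) * τ + d) ^ 2)⁻¹) τ := by
  have hne := denom_ne a b c d hdet τ hτ
  have h1 : (a:ℂ) * d - b * c = 1 := by exact_mod_cast hdet
  have := (hasDerivAt_denom a b τ).fun_div (hasDerivAt_denom c d τ) hne
  have hnum : (a:ℂ) * ((c:ℂ) * τ + d) - ((a:ℂ) * τ + b) * c = 1 := by linear_combination h1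
  refine this.congr_deriv ?_
  rw [hnum, one_div]

/-- Key lemma: derivative of slash -/
lemma hasDerivAt_slash (F : ℂ → ℂ) (hF : DifferentiableOn ℂ F {z : ℂ | 0 < z.im})
    (a b c d : ℝ) (hdet : a * d - b * c = 1) (K : ℤ) (τ : ℂ) (hτ : 0 < τ.im) :
    HasDerivAt (slash K a b c d F)
      (2 * (Real.pi:ℂ) * I *
        ((K:ℂ) * (-(1 / (2 * (Real.pi:ℂ) * I)) * ((c:ℂ) / ((c:ℂ) * τ + d))) *
            slash K a b c d F τ +
          slash (K + 2) a b c d (Dop F) τ)) τ := by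
  have hne := denom_ne a b c d hdet τ hτ
  have hgτ : 0 < (((a:ℂ) * τ + b) / ((c:ℂ) * τ + d)).im := im_g a b c d hdet τ hτ
  have hFat : DifferentiableAt ℂ F (((a:ℂ) * τ + b) / ((c:ℂ) * τ + d)) :=
    hF.differentiableAt (isOpen_H.mem_nhds hgτ)
  have hcomp : HasDerivAt (fun t : ℂ => F (((a:ℂ) * t + b) / ((c:ℂ) * t + d)))
      (deriv F (((a:ℂ) * τ + b) / ((c:ℂ) * τ + d)) * ((((c:ℂ) * τ + d) ^ 2)⁻¹)) τ :=
    (hFat.hasDerivAt).comp τ (hasDerivAt_moebius a b c d hdet τ hτ)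
  have hzpow : HasDerivAt (fun t : ℂ => ((c:ℂ) * t + d) ^ (-K))
      (((-K : ℤ):ℂ) * ((c:ℂ) * τ + d) ^ (-K - 1) * c) τ :=
    by have h := hasDerivAt_zpow (-K) ((c:ℂ) * τ + d) (Or.inl hne); exact h.comp τ (hasDerivAt_denom c d τ)
  have hmul := hzpow.fun_mul hcomp
  refine hmul.congr_deriv ?_
  show _ = _
  have hKne : ((c:ℂ) * τ + d) ^ K ≠ 0 := zpow_ne_zero _ hne
  have e1 : ((c:ℂ) * τ + d) ^ (-K - 1) = ((c:ℂ) * τ + d) ^ (-K) * (((c:ℂ) * τ + d))⁻¹ :=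
    zpow_sub_one₀ hne _
  have e2 : ((c:ℂ) * τ + d) ^ (-(K + 2)) = ((c:ℂ) * τ + d) ^ (-K) * (((c:ℂ) * τ + d) ^ 2)⁻¹ := by
    rw [show -(K + 2) = -K + (-2) by ring, zpow_add₀ hne]
    congr 1
  simp only [slash, Dop, e1, e2]
  push_cast
  field_simp [hne, hKne, twoPiI_ne]

lemma hasDerivAt_upow (a b c d : ℝ) (hdet : a * d - b * c = 1) (n : ℕ) (τ : ℂ) (hτ : 0 < τ.im) :
    HasDerivAt (fun t : ℂ => (-(1 / (2 * (Real.pi:ℂ) * I)) * ((c:ℂ) / ((c:ℂ) * t + d))) ^ n)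
      (2 * (Real.pi:ℂ) * I *
        ((n : ℂ) * (-(1 / (2 * (Real.pi:ℂ) * I)) * ((c:ℂ) / ((c:ℂ) * τ + d))) ^ (n + 1))) τ := by
  have hne := denom_ne a b c d hdet τ hτ
  have hdiv : HasDerivAt (fun t : ℂ => (c:ℂ) / ((c:ℂ) * t + d))
      ((0 * ((c:ℂ) * τ + d) - (c:ℂ) * c) / ((c:ℂ) * τ + d) ^ 2) τ :=
    (hasDerivAt_const τ (c:ℂ)).fun_div (hasDerivAt_denom c d τ) hne
  have hu := (hdiv.const_mul (-(1 / (2 * (Real.pi:ℂ) * I)))).fun_pow n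
  refine hu.congr_deriv ?_
  rcases n with _ | j
  · norm_num
  · push_cast
    have h2 : (2 * (Real.pi:ℂ) * I) * (-(1 / (2 * (Real.pi:ℂ) * I)) * ((c:ℂ) / ((c:ℂ) * τ + d))) ^ 2 =
        -(1 / (2 * (Real.pi:ℂ) * I)) * ((0 * ((c:ℂ) * τ + d) - (c:ℂ) * c) / ((c:ℂ) * τ + d) ^ 2) := by
      have h3 := twoPiI_ne
      field_simp
      ring
    linear_combination -((j:ℂ) + 1) * (-(1 / (2 * (Real.pi:ℂ) * I)) * ((c:ℂ) / ((c:ℂ) * τ + d))) ^ j * h2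



lemma sum_step (K U : ℂ) (S : ℕ → ℂ) (m : ℕ) :
    ∑ r ∈ Finset.range (m + 1),
      ((m.choose r : ℂ) * risingC (K + r) (m - r) * (((m - r : ℕ) : ℂ) + (K + 2 * r)) *
          U ^ (m - r + 1) * S r +
        (m.choose r : ℂ) * risingC (K + r) (m - r) * U ^ (m - r) * S (r + 1))
    = ∑ r ∈ Finset.range (m + 1 + 1),
        (((m + 1).choose r : ℂ) * risingC (K + r) (m + 1 - r) * U ^ (m + 1 - r) * S r) := by
  rw [Finset.sum_add_distrib]
  rw [Finset.sum_range_succ'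
    (fun r => ((m + 1).choose r : ℂ) * risingC (K + r) (m + 1 - r) * U ^ (m + 1 - r) * S r) (m + 1)]
  rw [Finset.sum_range_succ'
    (fun r => (m.choose r : ℂ) * risingC (K + r) (m - r) * (((m - r : ℕ) : ℂ) + (K + 2 * r)) *
      U ^ (m - r + 1) * S r) m]
  rw [Finset.sum_range_succ
    (fun r => (m.choose r : ℂ) * risingC (K + r) (m - r) * U ^ (m - r) * S (r + 1)) m]
  rw [Finset.sum_range_succ
    (fun r => ((m + 1).choose (r + 1) : ℂ) * risingC (K + (r + 1 : ℕ)) (m + 1 - (r + 1)) *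
      U ^ (m + 1 - (r + 1)) * S (r + 1)) m]
  have h0 : (m.choose 0 : ℂ) * risingC (K + (0 : ℕ)) (m - 0) * (((m - 0 : ℕ) : ℂ) + (K + 2 * (0 : ℕ))) *
      U ^ (m - 0 + 1) * S 0
      = ((m + 1).choose 0 : ℂ) * risingC (K + (0 : ℕ)) (m + 1 - 0) * U ^ (m + 1 - 0) * S 0 := by
    simp only [Nat.choose_zero_right, Nat.sub_zero, Nat.cast_zero, Nat.cast_one, mul_zero, add_zero]
    rw [risingC_succ]
    push_cast
    ring
  have hm : (m.choose m : ℂ) * risingC (K + m) (m - m) * U ^ (m - m) * S (m + 1)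
      = ((m + 1).choose (m + 1) : ℂ) * risingC (K + (m + 1 : ℕ)) (m + 1 - (m + 1)) *
        U ^ (m + 1 - (m + 1)) * S (m + 1) := by
    simp [Nat.choose_self, Nat.sub_self, risingC_zero]
  have hr : ∀ r ∈ Finset.range m,
      (m.choose (r + 1) : ℂ) * risingC (K + (r + 1 : ℕ)) (m - (r + 1)) *
          (((m - (r + 1) : ℕ) : ℂ) + (K + 2 * (r + 1 : ℕ))) * U ^ (m - (r + 1) + 1) * S (r + 1) +
        (m.choose r : ℂ) * risingC (K + r) (m - r) * U ^ (m - r) * S (r + 1)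
      = ((m + 1).choose (r + 1) : ℂ) * risingC (K + (r + 1 : ℕ)) (m + 1 - (r + 1)) *
          U ^ (m + 1 - (r + 1)) * S (r + 1) := by
    intro r hrm
    rw [Finset.mem_range] at hrm
    have hkc := key_comb K m r hrm.le
    obtain ⟨j, rfl⟩ : ∃ j, m = r + 1 + j := ⟨m - r - 1, by omega⟩
    have e1 : r + 1 + j - (r + 1) = j := by omega
    have e2 : r + 1 + j - r = j + 1 := by omega
    have e3 : r + 1 + j + 1 - (r + 1) = j + 1 := by omega
    have e4 : r + 1 + j - r - 1 = j := by omega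
    rw [e1, e2, e3] 
    rw [e2] at hkc
    simp only [Nat.add_sub_cancel] at hkc
    have e5 : K + ((r + 1 : ℕ) : ℂ) = K + (r : ℂ) + 1 := by push_cast; ring
    rw [e5]
    have e6 : ((j : ℕ) : ℂ) + (K + 2 * ((r + 1 : ℕ) : ℂ)) = K + ((r + 1 + j : ℕ) : ℂ) + (r : ℂ) + 1 := by
      push_cast; ring
    rw [e6]
    linear_combination (U ^ (j + 1) * S (r + 1)) * hkc
  have hsum : (∑ r ∈ Finset.range m,
        ((m.choose (r + 1) : ℂ) * risingC (K + (r + 1 : ℕ)) (m - (r + 1)) *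
          (((m - (r + 1) : ℕ) : ℂ) + (K + 2 * (r + 1 : ℕ))) * U ^ (m - (r + 1) + 1) * S (r + 1))) +
      (∑ r ∈ Finset.range m,
        ((m.choose r : ℂ) * risingC (K + r) (m - r) * U ^ (m - r) * S (r + 1)))
      = ∑ r ∈ Finset.range m,
        (((m + 1).choose (r + 1) : ℂ) * risingC (K + (r + 1 : ℕ)) (m + 1 - (r + 1)) *
          U ^ (m + 1 - (r + 1)) * S (r + 1)) := by
    rw [← Finset.sum_add_distrib]
    exact Finset.sum_congr rfl hr
  linear_combination h0 + hm + hsum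

set_option maxHeartbeats 1000000 in
/-- Lemma (Transf1): for holomorphic `f` on the upper half-plane, `γ ∈ SL₂(ℝ)`, `k ∈ ℤ`, `m ≥ 0`,
`D^m((f|_k γ)(τ)) = Σ_{r=0}^m C(m,r)·(k+r)_{m-r}·(-(1/(2πi))·c/(cτ+d))^{m-r}·((D^r f)|_{k+2r} γ)(τ)`. -/
theorem statement1 (f : ℂ → ℂ) (hf : DifferentiableOn ℂ f {z : ℂ | 0 < z.im})
    (a b c d : ℝ) (hdet : a * d - b * c = 1) (k : ℤ) (m : ℕ) (τ : ℂ) (hτ : 0 < τ.im) :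
    Dop^[m] (slash k a b c d f) τ =
      ∑ r ∈ Finset.range (m + 1),
        (m.choose r : ℂ) * risingC ((k : ℂ) + (r : ℂ)) (m - r) *
          (-(1 / (2 * ↑Real.pi * I)) * ((c : ℂ) / ((c : ℂ) * τ + (d : ℂ)))) ^ (m - r) *
          slash (k + 2 * r) a b c d (Dop^[r] f) τ := by
  induction m generalizing τ hτ with
  | zero => simp [risingC]
  | succ m IH =>
      rw [Function.iterate_succ_apply']
      have hDopEq : Dop (Dop^[m] (slash k a b c d f)) τ
          = Dop (fun z => ∑ r ∈ Finset.range (m + 1),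
              (m.choose r : ℂ) * risingC ((k : ℂ) + (r : ℂ)) (m - r) *
              (-(1 / (2 * ↑Real.pi * I)) * ((c : ℂ) / ((c : ℂ) * z + (d : ℂ)))) ^ (m - r) *
              slash (k + 2 * r) a b c d (Dop^[r] f) z) τ := by
        unfold Dop
        congr 1
        apply Filter.EventuallyEq.deriv_eq
        filter_upwards [isOpen_H.mem_nhds hτ] with z hz
        exact IH z hz
      rw [hDopEq]
      have hsum : HasDerivAt (fun z => ∑ r ∈ Finset.range (m + 1),
          (m.choose r : ℂ) * risingC ((k : ℂ) + (r : ℂ)) (m - r) *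
          (-(1 / (2 * ↑Real.pi * I)) * ((c : ℂ) / ((c : ℂ) * z + (d : ℂ)))) ^ (m - r) *
          slash (k + 2 * r) a b c d (Dop^[r] f) z)
          (∑ r ∈ Finset.range (m + 1),
            ((m.choose r : ℂ) * risingC ((k : ℂ) + (r : ℂ)) (m - r) *
              (2 * (Real.pi:ℂ) * I * (((m - r : ℕ) : ℂ) *
                (-(1 / (2 * ↑Real.pi * I)) * ((c : ℂ) / ((c : ℂ) * τ + (d : ℂ)))) ^ (m - r + 1))) *
              slash (k + 2 * r) a b c d (Dop^[r] f) τ +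
            (m.choose r : ℂ) * risingC ((k : ℂ) + (r : ℂ)) (m - r) *
              (-(1 / (2 * ↑Real.pi * I)) * ((c : ℂ) / ((c : ℂ) * τ + (d : ℂ)))) ^ (m - r) *
              (2 * (Real.pi:ℂ) * I *
                (((k + 2 * (r:ℤ) : ℤ) : ℂ) *
                    (-(1 / (2 * ↑Real.pi * I)) * ((c : ℂ) / ((c : ℂ) * τ + (d : ℂ)))) *
                    slash (k + 2 * r) a b c d (Dop^[r] f) τ +
                  slash (k + 2 * r + 2) a b c d (Dop (Dop^[r] f)) τ)))) τ := by
        apply HasDerivAt.fun_sum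
        intro r _
        exact ((hasDerivAt_upow a b c d hdet (m - r) τ hτ).const_mul
            ((m.choose r : ℂ) * risingC ((k : ℂ) + (r : ℂ)) (m - r))).mul
          (hasDerivAt_slash (Dop^[r] f) (Dop_iter_diff f hf r) a b c d hdet (k + 2 * r) τ hτ)
      show (2 * ↑Real.pi * I)⁻¹ * deriv _ τ = _
      rw [hsum.deriv, Finset.mul_sum]
      have hAB : ∀ r ∈ Finset.range (m + 1),
          (2 * (Real.pi:ℂ) * I)⁻¹ *
            ((m.choose r : ℂ) * risingC ((k : ℂ) + (r : ℂ)) (m - r) *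
              (2 * (Real.pi:ℂ) * I * (((m - r : ℕ) : ℂ) *
                (-(1 / (2 * ↑Real.pi * I)) * ((c : ℂ) / ((c : ℂ) * τ + (d : ℂ)))) ^ (m - r + 1))) *
              slash (k + 2 * r) a b c d (Dop^[r] f) τ +
            (m.choose r : ℂ) * risingC ((k : ℂ) + (r : ℂ)) (m - r) *
              (-(1 / (2 * ↑Real.pi * I)) * ((c : ℂ) / ((c : ℂ) * τ + (d : ℂ)))) ^ (m - r) *
              (2 * (Real.pi:ℂ) * I *
                (((k + 2 * (r:ℤ) : ℤ) : ℂ) *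
                    (-(1 / (2 * ↑Real.pi * I)) * ((c : ℂ) / ((c : ℂ) * τ + (d : ℂ)))) *
                    slash (k + 2 * r) a b c d (Dop^[r] f) τ +
                  slash (k + 2 * r + 2) a b c d (Dop (Dop^[r] f)) τ)))
          = (m.choose r : ℂ) * risingC ((k : ℂ) + (r : ℂ)) (m - r) *
              (((m - r : ℕ) : ℂ) + ((k : ℂ) + 2 * (r : ℂ))) *
              (-(1 / (2 * ↑Real.pi * I)) * ((c : ℂ) / ((c : ℂ) * τ + (d : ℂ)))) ^ (m - r + 1) *
              slash (k + 2 * r) a b c d (Dop^[r] f) τ +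
            (m.choose r : ℂ) * risingC ((k : ℂ) + (r : ℂ)) (m - r) *
              (-(1 / (2 * ↑Real.pi * I)) * ((c : ℂ) / ((c : ℂ) * τ + (d : ℂ)))) ^ (m - r) *
              slash (k + 2 * ((r : ℕ) + 1 : ℕ)) a b c d (Dop^[r + 1] f) τ := by
        intro r _
        have hw : slash (k + 2 * ((r : ℕ) + 1 : ℕ)) a b c d (Dop^[r + 1] f) τ
            = slash (k + 2 * r + 2) a b c d (Dop (Dop^[r] f)) τ := by
          rw [Function.iterate_succ_apply']
          congr 1
          push_cast
          ring
        rw [hw]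
        push_cast
        have hc : (2 * (Real.pi:ℂ) * I)⁻¹ * (2 * (Real.pi:ℂ) * I) = 1 :=
          inv_mul_cancel₀ twoPiI_ne
        linear_combination
          ((m.choose r : ℂ) * risingC ((k : ℂ) + (r : ℂ)) (m - r) *
              (((m - r : ℕ) : ℂ) *
                (-(1 / (2 * ↑Real.pi * I)) * ((c : ℂ) / ((c : ℂ) * τ + (d : ℂ)))) ^ (m - r + 1)) *
              slash (k + 2 * r) a b c d (Dop^[r] f) τ +
            (m.choose r : ℂ) * risingC ((k : ℂ) + (r : ℂ)) (m - r) *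
              (-(1 / (2 * ↑Real.pi * I)) * ((c : ℂ) / ((c : ℂ) * τ + (d : ℂ)))) ^ (m - r) *
              (((k : ℂ) + 2 * (r : ℂ)) *
                  (-(1 / (2 * ↑Real.pi * I)) * ((c : ℂ) / ((c : ℂ) * τ + (d : ℂ)))) *
                  slash (k + 2 * r) a b c d (Dop^[r] f) τ +
                slash (k + 2 * r + 2) a b c d (Dop (Dop^[r] f)) τ)) * hc
      rw [Finset.sum_congr rfl hAB]
      have := sum_step ((k : ℂ)) (-(1 / (2 * ↑Real.pi * I)) * ((c : ℂ) / ((c : ℂ) * τ + (d : ℂ))))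
        (fun r => slash (k + 2 * r) a b c d (Dop^[r] f) τ) m
      exact this
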